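/- On a parallelogram with sides of lengths a and b and angle θ ∈ (0, π), the energy of the bilinear hourglass mode with isotropic diffusion κI is τ = κ(a² + b²)/(3ab sinθ). -/

import Mathlib

open MeasureTheory Real

/-- Gradient of a function on ℝ² as a pair. -/
lemma int_quad01 (e0 e1 e2 : ℝ) :
    ∫ x in (0:ℝ)..1, (e0 + e1*x + e2*x^2) = e0 + e1/2 + e2/3 := by
  have h : ∀ x ∈ Set.uIcc (0:ℝ) 1, HasDerivAt (fun x : ℝ => e0*x + (e1/2)*x^2 + (e2/3)*x^3)
      (e0 + e1*x + e2*x^2) x := by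
    intro x _
    have := (((hasDerivAt_id x).const_mul e0).add
      (((hasDerivAt_pow 2 x).const_mul (e1/2)).add ((hasDerivAt_pow 3 x).const_mul (e2/3))))
    rw [show (fun x : ℝ => e0*x + (e1/2)*x^2 + (e2/3)*x^3) = ((fun y => e0 * id y) + ((fun y => e1 / 2 * y ^ 2) + fun y => e2 / 3 * y ^ 3)) from by funext y; simp only [Pi.add_apply, id]; ring]
    exact this.congr_deriv (by norm_num; ring)
  rw [intervalIntegral.integral_eq_sub_of_hasDerivAt h
    ((Continuous.intervalIntegrable (by continuity) 0 1))]
  ring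

noncomputable def grad (f : ℝ × ℝ → ℝ) (p : ℝ × ℝ) : ℝ × ℝ :=
  (fderiv ℝ f p (1, 0), fderiv ℝ f p (0, 1))

/-- on the parallelogram spanned by `u = (a,0)` and
`v = (b cosθ, b sinθ)` with `θ ∈ (0,π)`, the energy of the bilinear hourglass
mode for isotropic diffusion `κI` is `τ = κ(a² + b²)/(3ab sinθ)`.  The bilinear
shape functions are transported from the Q1 reference functions on `[0,1]²` by
the affine map `F(ξ,η) = ξu + ηv`. -/
theorem hourglass_energy_parallelogram_isotropic
    (a b θ κ : ℝ) (ha : 0 < a) (hb : 0 < b) (hθ : θ ∈ Set.Ioo 0 π)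
    (F : ℝ × ℝ → ℝ × ℝ)
    (hF : ∀ w : ℝ × ℝ, F w = (a * w.1 + b * Real.cos θ * w.2, b * Real.sin θ * w.2))
    (φ : Fin 4 → ℝ × ℝ → ℝ)
    -- the Q1 reference shape functions on [0,1]², transported by F
    (hφ0 : ∀ w : ℝ × ℝ, φ 0 (F w) = (1 - w.1) * (1 - w.2))
    (hφ1 : ∀ w : ℝ × ℝ, φ 1 (F w) = w.1 * (1 - w.2))
    (hφ2 : ∀ w : ℝ × ℝ, φ 2 (F w) = w.1 * w.2)
    (hφ3 : ∀ w : ℝ × ℝ, φ 3 (F w) = (1 - w.1) * w.2)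
    (hφdiff : ∀ i : Fin 4, Differentiable ℝ (φ i))
    (Ψh : ℝ × ℝ → ℝ)
    (hΨ : ∀ p, Ψh p = (1 / 2) * (-φ 0 p + φ 1 p - φ 2 p + φ 3 p))
    (τ : ℝ)
    (hτ : τ = κ * ∫ p in F '' Set.Icc ((0:ℝ), (0:ℝ)) (1, 1),
      ((grad Ψh p).1 ^ 2 + (grad Ψh p).2 ^ 2)) :
    τ = κ * (a ^ 2 + b ^ 2) / (3 * a * b * Real.sin θ) := by
  set c := Real.cos θ with hc
  set s := Real.sin θ with hsdef
  have hs : 0 < s := Real.sin_pos_of_pos_of_lt_pi hθ.1 hθ.2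
  have hsne : s ≠ 0 := ne_of_gt hs
  have hane : a ≠ 0 := ne_of_gt ha
  have hbne : b ≠ 0 := ne_of_gt hb
  -- the inverse map
  set G : ℝ × ℝ → ℝ × ℝ := fun p => ((p.1 - (c / s) * p.2)/a, p.2/(b*s)) with hG
  have hFG : ∀ p : ℝ × ℝ, F (G p) = p := by
    intro p
    rw [hF]
    have h1 : a * (G p).1 + b * c * (G p).2 = p.1 := by simp only [hG]; field_simp; ring
    have h2 : b * s * (G p).2 = p.2 := by simp only [hG]; field_simp
    exact Prod.ext h1 h2
  have hGF : ∀ w : ℝ × ℝ, G (F w) = w := by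
    intro w
    rw [hF]
    have h1 : ((a * w.1 + b * c * w.2) - (c / s) * (b * s * w.2))/a = w.1 := by
      field_simp; ring
    have h2 : (b * s * w.2)/(b*s) = w.2 := by field_simp
    exact Prod.ext h1 h2
  -- explicit formula for Ψh
  set ψ : ℝ × ℝ → ℝ := fun q => (1/a) * (q.1 - (c/s) * q.2) + (1/(b*s)) * q.2 -
      2 * ((1/a) * (q.1 - (c/s) * q.2) * ((1/(b*s)) * q.2)) - 1/2 with hψdef
  have hΨF : ∀ w : ℝ × ℝ, Ψh (F w) = w.1 + w.2 - 2*(w.1*w.2) - 1/2 := by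
    intro w
    rw [hΨ (F w), hφ0 w, hφ1 w, hφ2 w, hφ3 w]; ring
  have hΨeq : Ψh = ψ := by
    funext p
    have h := hΨF (G p)
    rw [hFG p] at h
    rw [h, hψdef]
    simp only [hG]
    ring
  -- gradient of Ψh
  have hgradψ : ∀ p : ℝ × ℝ, grad Ψh p =
      ((1/a) * (1 - 2 * ((1/(b*s)) * p.2)),
       (1/a) * (-(c/s)) * (1 - 2 * ((1/(b*s)) * p.2)) +
         (1/(b*s)) * (1 - 2 * ((1/a) * (p.1 - (c/s) * p.2)))) := by
    intro p
    have hA : HasFDerivAt (fun q : ℝ × ℝ => (1/a) * (q.1 - (c/s) * q.2))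
        ((1/a) • ((ContinuousLinearMap.fst ℝ ℝ ℝ) - (c/s) • ContinuousLinearMap.snd ℝ ℝ ℝ)) p :=
      (hasFDerivAt_fst.sub (hasFDerivAt_snd.const_mul (c/s))).const_mul (1/a)
    have hB : HasFDerivAt (fun q : ℝ × ℝ => (1/(b*s)) * q.2)
        ((1/(b*s)) • ContinuousLinearMap.snd ℝ ℝ ℝ) p :=
      hasFDerivAt_snd.const_mul (1/(b*s))
    have hd := (((hA.add hB).sub ((hA.mul hB).const_mul 2)).sub_const (1/2))
    have hd' : HasFDerivAt (fun q : ℝ × ℝ => 1 / a * (q.1 - c / s * q.2) + 1 / (b * s) * q.2 - 2 * (1 / a * (q.1 - c / s * q.2) * (1 / (b * s) * q.2)) - 1 / 2) _ p := hd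
    rw [grad, hΨeq, hψdef, hd'.fderiv]
    simp [ContinuousLinearMap.smul_apply]
    constructor <;> ring
  -- gradient at F w
  have hgradF : ∀ w : ℝ × ℝ, grad Ψh (F w) =
      ((1 - 2*w.2)/a, (1 - 2*w.1)/(b*s) - (c/s)*(1 - 2*w.2)/a) := by
    intro w
    rw [hgradψ (F w), hF w]
    have h1 : (1/a) * (1 - 2 * ((1/(b*s)) * (b * s * w.2))) = (1 - 2*w.2)/a := by
      field_simp
    have h2 : (1/a) * (-(c/s)) * (1 - 2 * ((1/(b*s)) * (b * s * w.2))) +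
        (1/(b*s)) * (1 - 2 * ((1/a) * ((a * w.1 + b * c * w.2) - (c/s) * (b * s * w.2)))) =
        (1 - 2*w.1)/(b*s) - (c/s)*(1 - 2*w.2)/a := by
      field_simp; ring
    exact Prod.ext h1 h2
  -- the linear map and its determinant
  set M : ℝ × ℝ →L[ℝ] ℝ × ℝ :=
    ((a • ContinuousLinearMap.fst ℝ ℝ ℝ + (b*c) • ContinuousLinearMap.snd ℝ ℝ ℝ).prod
      ((b*s) • ContinuousLinearMap.snd ℝ ℝ ℝ)) with hM
  have hFM : F = fun w => M w := by
    funext w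
    rw [hF]
    simp [hM, ContinuousLinearMap.prod_apply]
  have hMdet : M.det = a * (b*s) := by
    show LinearMap.det (M : ℝ × ℝ →ₗ[ℝ] ℝ × ℝ) = a * (b*s)
    rw [← LinearMap.det_toMatrix (Module.Basis.finTwoProd ℝ), Matrix.det_fin_two]
    simp [LinearMap.toMatrix_apply, Module.Basis.finTwoProd, hM]
  -- change of variables
  have hInj : Set.InjOn F (Set.Icc ((0:ℝ), (0:ℝ)) (1, 1)) := by
    intro x _ y _ h
    have := congrArg G h
    rwa [hGF, hGF] at this
  have hcov := integral_image_eq_integral_abs_det_fderiv_smul (μ := volume)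
    (measurableSet_Icc (a := ((0:ℝ), (0:ℝ))) (b := (1, 1)))
    (fun x _ => by rw [hFM]; exact (M.hasFDerivAt).hasFDerivWithinAt) hInj
    (fun p => (grad Ψh p).1 ^ 2 + (grad Ψh p).2 ^ 2)
  rw [hτ, hcov]
  -- rewrite the integrand
  have habs : |M.det| = a * b * s := by
    rw [hMdet, abs_of_pos (by positivity)]; ring
  have hintg : ∀ w : ℝ × ℝ,
      |M.det| • ((grad Ψh (F w)).1 ^ 2 + (grad Ψh (F w)).2 ^ 2) =
      (a*b*s) * (((1 - 2*w.2)/a)^2 + ((1 - 2*w.1)/(b*s) - (c/s)*(1 - 2*w.2)/a)^2) := by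
    intro w
    rw [habs, hgradF w, smul_eq_mul]
  simp only [hintg]
  -- iterated integral
  set f : ℝ × ℝ → ℝ := fun w =>
    (a*b*s) * (((1 - 2*w.2)/a)^2 + ((1 - 2*w.1)/(b*s) - (c/s)*(1 - 2*w.2)/a)^2) with hf
  have hfc : Continuous f := by
    apply Continuous.mul continuous_const
    fun_prop
  have hicc : Set.Icc ((0:ℝ), (0:ℝ)) ((1:ℝ), (1:ℝ)) =
      Set.Icc (0:ℝ) 1 ×ˢ Set.Icc (0:ℝ) 1 := Set.Icc_prod_eq _ _
  have hint : IntegrableOn f (Set.Icc (0:ℝ) 1 ×ˢ Set.Icc (0:ℝ) 1) (volume.prod volume) := by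
    rw [← Measure.volume_eq_prod]
    exact hfc.integrableOn_Icc.mono_set (by rw [hicc])
  calc κ * ∫ w in Set.Icc ((0:ℝ), (0:ℝ)) (1, 1), f w
      = κ * ∫ x in Set.Icc (0:ℝ) 1, ∫ y in Set.Icc (0:ℝ) 1, f (x, y) := by
        rw [hicc, Measure.volume_eq_prod, setIntegral_prod _ hint]
    _ = κ * (a ^ 2 + b ^ 2) / (3 * a * b * s) := by
        have hinner : ∀ x : ℝ, (∫ y in Set.Icc (0:ℝ) 1, f (x, y)) =
            (a*b*s) * (1/(3*a^2) + (c/(s*a))^2/3 + ((1-2*x)/(b*s))^2) := by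
          intro x
          rw [integral_Icc_eq_integral_Ioc, ← intervalIntegral.integral_of_le zero_le_one]
          rw [show (fun y => f (x, y)) = fun y =>
            ((a*b*s) * ((1/a)^2 + ((1-2*x)/(b*s) - c/(s*a))^2)) +
            ((a*b*s) * (-4*(1/a)^2 + 4*((1-2*x)/(b*s))*(c/(s*a)) - 4*(c/(s*a))^2)) * y +
            ((a*b*s) * (4*(1/a)^2 + 4*(c/(s*a))^2)) * y^2 from funext fun y => by
              simp only [hf]; ring]
          rw [int_quad01]; ring
        simp only [hinner]
        rw [integral_Icc_eq_integral_Ioc, ← intervalIntegral.integral_of_le zero_le_one]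
        rw [show (fun x : ℝ => (a*b*s) * (1/(3*a^2) + (c/(s*a))^2/3 + ((1-2*x)/(b*s))^2)) =
          fun x : ℝ =>
            ((a*b*s) * (1/(3*a^2) + (c/(s*a))^2/3 + (1/(b*s))^2)) +
            ((a*b*s) * (-4*(1/(b*s))^2)) * x +
            ((a*b*s) * (4*(1/(b*s))^2)) * x^2 from funext fun x => by ring]
        rw [int_quad01]
        have hpy : s^2 + c^2 = 1 := Real.sin_sq_add_cos_sq θ
        field_simp
        linear_combination (2 * κ * b^2) * hpy
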